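/- For a bounded kernel with bound M_k, if Z_1,…,Z_n are i.i.d. from P, then for all δ > 0, P(‖μ − μ̂‖_H > 2√(M_k/n)(1 + √(δ/2))) ≤ e^{−δ}, where μ = E[φ(Z)] and μ̂ = (1/n)Σ_i φ(Z_i). -/

import Mathlib

open MeasureTheory ProbabilityTheory Real
open scoped RealInnerProductSpace

/-- Core analytic inequality behind Hoeffding's lemma. -/
lemma hoeffding_key {p : ℝ} (hp0 : 0 ≤ p) (hp1 : p ≤ 1) (h : ℝ) :
    1 - p + p * exp h ≤ exp (p * h + h ^ 2 / 8) := by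
  -- u h := 1 - p + p * exp h  is positive
  set u : ℝ → ℝ := fun x => 1 - p + p * exp x with hu
  have hupos : ∀ x, 0 < u x := by
    intro x
    rcases eq_or_lt_of_le hp1 with h1 | h1
    · subst h1; simp [hu, exp_pos]
    · have : 0 < 1 - p := by linarith
      have : 0 ≤ p * exp x := mul_nonneg hp0 (exp_pos x).le
      simp only [hu]; linarith
  -- r x := p * exp x / u x with r' = p(1-p)exp x / u^2 ≤ 1/4
  set r : ℝ → ℝ := fun x => p * exp x / u x with hr
  have hudiff : ∀ x, HasDerivAt u (p * exp x) x := by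
    intro x
    exact ((hasDerivAt_exp x).const_mul p).const_add (1 - p)
  have hrderiv : ∀ x, HasDerivAt r ((1 - p) * (p * exp x) / (u x) ^ 2) x := by
    intro x
    have h1 : HasDerivAt (fun x => p * exp x) (p * exp x) x := (hasDerivAt_exp x).const_mul p
    have := h1.div (hudiff x) (hupos x).ne'
    exact this.congr_deriv (by simp only [hu]; ring)
  have hr_le : ∀ x, (1 - p) * (p * exp x) / (u x) ^ 2 ≤ 1 / 4 := by
    intro x
    rw [div_le_iff₀ (pow_pos (hupos x) 2)]
    have hsq : 0 ≤ ((1 - p) - p * exp x) ^ 2 := sq_nonneg _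
    have : u x = (1 - p) + p * exp x := by simp [hu]
    nlinarith [sq_nonneg ((1 - p) - p * exp x)]
  have hr_nonneg : ∀ x, 0 ≤ (1 - p) * (p * exp x) / (u x) ^ 2 := by
    intro x
    have h1p : 0 ≤ 1 - p := by linarith
    positivity
  -- C x := p + x/4 - r x, C 0 = 0, C' = 1/4 - r' ≥ 0
  set C : ℝ → ℝ := fun x => p + x / 4 - r x with hC
  have hCderiv : ∀ x, HasDerivAt C (1 / 4 - (1 - p) * (p * exp x) / (u x) ^ 2) x := by
    intro x
    exact ((hasDerivAt_id x).div_const 4).const_add p |>.sub (hrderiv x)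
  have hCmono : Monotone C := by
    apply monotone_of_deriv_nonneg
    · exact fun x => (hCderiv x).differentiableAt
    · intro x
      rw [(hCderiv x).deriv]
      have := hr_le x
      linarith
  have hC0 : C 0 = 0 := by
    simp [hC, hr, hu]
  -- g x := p*x + x^2/8 - log (u x);  g' = C, g 0 = 0
  set g : ℝ → ℝ := fun x => p * x + x ^ 2 / 8 - Real.log (u x) with hg
  have hgderiv : ∀ x, HasDerivAt g (C x) x := by
    intro x
    have h1 : HasDerivAt (fun x : ℝ => p * x + x ^ 2 / 8) (p + 2 * x / 8) x := by
      have := ((hasDerivAt_id' x).const_mul p).add ((hasDerivAt_pow 2 x).div_const 8)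
      exact this.congr_deriv (by norm_num)
    have h2 : HasDerivAt (fun x => Real.log (u x)) (p * exp x / u x) x := by
      simpa using (hudiff x).log (hupos x).ne'
    have := h1.sub h2
    exact this.congr_deriv (by simp only [hC, hr]; ring)
  have hg_nonneg : ∀ x, 0 ≤ g x := by
    intro x
    have hg0 : g 0 = 0 := by simp [hg, hu]
    rcases le_or_gt 0 x with hx | hx
    · have : MonotoneOn g (Set.Ici (0:ℝ)) := by
        apply monotoneOn_of_deriv_nonneg (convex_Ici 0)
        · exact (fun y _ => (hgderiv y).differentiableAt.continuousAt.continuousWithinAt)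
        · exact fun y _ => (hgderiv y).differentiableAt.differentiableWithinAt
        · intro y hy
          rw [(hgderiv y).deriv]
          rw [interior_Ici] at hy
          have : C 0 ≤ C y := hCmono hy.le
          linarith [hC0]
      have := this Set.self_mem_Ici (Set.mem_Ici.2 hx) hx
      linarith [hg0]
    · have : AntitoneOn g (Set.Iic (0:ℝ)) := by
        apply antitoneOn_of_deriv_nonpos (convex_Iic 0)
        · exact (fun y _ => (hgderiv y).differentiableAt.continuousAt.continuousWithinAt)
        · exact fun y _ => (hgderiv y).differentiableAt.differentiableWithinAt
        · intro y hy
          rw [(hgderiv y).deriv]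
          rw [interior_Iic] at hy
          have : C y ≤ C 0 := hCmono hy.le
          linarith [hC0]
      have := this (Set.mem_Iic.2 hx.le) Set.self_mem_Iic hx.le
      linarith [hg0]
  -- conclude
  have := hg_nonneg h
  have hlog : Real.log (u h) ≤ p * h + h ^ 2 / 8 := by
    simp only [hg] at this; linarith
  calc u h = exp (Real.log (u h)) := (exp_log (hupos h)).symm
    _ ≤ exp (p * h + h ^ 2 / 8) := exp_le_exp.2 hlog

/-- Hoeffding's lemma. -/
lemma hoeffding_lemma {α : Type*} [MeasurableSpace α] (ν : Measure α) [IsProbabilityMeasure ν]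
    (f : α → ℝ) (hf : Measurable f) (a b t : ℝ)
    (hab : ∀ x, f x ∈ Set.Icc a b) (hmean : ∫ x, f x ∂ν = 0) :
    ∫ x, exp (t * f x) ∂ν ≤ exp (t ^ 2 * (b - a) ^ 2 / 8) := by
  have hfint : Integrable f ν := by
    refine (integrable_const (max |a| |b|)).mono' hf.aestronglyMeasurable
      (Filter.Eventually.of_forall fun x => ?_)
    rw [Real.norm_eq_abs, abs_le]
    constructor
    · calc -(max |a| |b|) ≤ -|a| := by simp
        _ ≤ a := neg_abs_le a
        _ ≤ f x := (hab x).1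
    · calc f x ≤ b := (hab x).2
        _ ≤ |b| := le_abs_self b
        _ ≤ max |a| |b| := le_max_right _ _
  have ha0 : a ≤ 0 := by
    have h1 : ∫ _x, a ∂ν ≤ ∫ x, f x ∂ν :=
      integral_mono (integrable_const a) hfint fun x => (hab x).1
    rw [hmean, integral_const] at h1
    simpa using h1
  have hb0 : 0 ≤ b := by
    have h1 : ∫ x, f x ∂ν ≤ ∫ _x, b ∂ν :=
      integral_mono hfint (integrable_const b) fun x => (hab x).2
    rw [hmean, integral_const] at h1
    simpa using h1
  rcases eq_or_lt_of_le (le_trans ha0 hb0) with hab' | hab'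
  · -- a = b, hence a = b = 0 and f ≡ 0
    have ha : a = 0 := by linarith
    have hb : b = 0 := by linarith
    have hfx : ∀ x, f x = 0 := fun x =>
      le_antisymm (hb ▸ (hab x).2) (ha ▸ (hab x).1)
    simp only [hfx, mul_zero, exp_zero, integral_const, measure_univ, ENNReal.toReal_one, probReal_univ,
      smul_eq_mul, mul_one]
    exact one_le_exp (by positivity)
  · -- a < b
    have hba : (0:ℝ) < b - a := by linarith
    set p : ℝ := -a / (b - a) with hp
    have hp0 : 0 ≤ p := div_nonneg (by linarith) hba.le
    have hp1 : p ≤ 1 := by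
      rw [div_le_one hba]; linarith
    set c1 : ℝ := exp (t * a) / (b - a) with hc1
    set c2 : ℝ := exp (t * b) / (b - a) with hc2
    have hpt : ∀ x, exp (t * f x) ≤ c1 * (b - f x) + c2 * (f x - a) := by
      intro x
      have hcx := convexOn_exp.2 (Set.mem_univ (t * a)) (Set.mem_univ (t * b))
        (div_nonneg (by linarith [(hab x).2] : (0:ℝ) ≤ b - f x) hba.le)
        (div_nonneg (by linarith [(hab x).1] : (0:ℝ) ≤ f x - a) hba.le)
        (by rw [← add_div, div_eq_one_iff_eq hba.ne']; ring)
      have harg : ((b - f x) / (b - a)) • (t * a) + ((f x - a) / (b - a)) • (t * b) = t * f x := by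
        simp only [smul_eq_mul]
        field_simp
        ring
      rw [harg] at hcx
      calc exp (t * f x) ≤ (b - f x) / (b - a) * exp (t * a) + (f x - a) / (b - a) * exp (t * b) :=
            hcx
        _ = c1 * (b - f x) + c2 * (f x - a) := by rw [hc1, hc2]; ring
    have hint_exp : Integrable (fun x => exp (t * f x)) ν := by
      refine (integrable_const (exp (|t| * max |a| |b|))).mono'
        (hf.const_mul t).exp.aestronglyMeasurable (Filter.Eventually.of_forall fun x => ?_)
      rw [Real.norm_eq_abs, abs_exp, exp_le_exp]
      calc t * f x ≤ |t * f x| := le_abs_self _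
        _ = |t| * |f x| := abs_mul t (f x)
        _ ≤ |t| * max |a| |b| := by
            apply mul_le_mul_of_nonneg_left _ (abs_nonneg t)
            rw [abs_le]
            exact ⟨by linarith [(hab x).1, neg_abs_le a, (le_max_left |a| |b| : |a| ≤ _)],
              by linarith [(hab x).2, le_abs_self b, (le_max_right |a| |b| : |b| ≤ _)]⟩
    have hstep : ∫ x, exp (t * f x) ∂ν ≤ c1 * b - c2 * a := by
      have hform : ∀ x, c1 * (b - f x) + c2 * (f x - a)
          = (c1 * b - c2 * a) + (c2 - c1) * f x := fun x => by ring
      have hRHSint : Integrable (fun x => (c1 * b - c2 * a) + (c2 - c1) * f x) ν :=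
        (integrable_const _).add (hfint.const_mul _)
      have h1 : ∫ x, exp (t * f x) ∂ν ≤ ∫ x, ((c1 * b - c2 * a) + (c2 - c1) * f x) ∂ν := by
        refine integral_mono hint_exp hRHSint fun x => ?_
        rw [← hform x]; exact hpt x
      have h2 : ∫ x, ((c1 * b - c2 * a) + (c2 - c1) * f x) ∂ν = c1 * b - c2 * a := by
        rw [integral_add (integrable_const _) (hfint.const_mul _), integral_const_mul,
          hmean, integral_const]
        simp
      linarith
    set h : ℝ := t * (b - a) with hh
    have heq : c1 * b - c2 * a = exp (t * a) * (1 - p + p * exp h) := by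
      have hexp : exp (t * b) = exp (t * a) * exp h := by
        rw [← exp_add]; congr 1; rw [hh]; ring
      rw [hc1, hc2, hexp, hp]
      field_simp
      ring
    calc ∫ x, exp (t * f x) ∂ν ≤ c1 * b - c2 * a := hstep
      _ = exp (t * a) * (1 - p + p * exp h) := heq
      _ ≤ exp (t * a) * exp (p * h + h ^ 2 / 8) :=
          mul_le_mul_of_nonneg_left (hoeffding_key hp0 hp1 h) (exp_pos _).le
      _ = exp (t ^ 2 * (b - a) ^ 2 / 8) := by
          rw [← exp_add]
          congr 1
          rw [hp, hh]
          field_simp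
          ring

lemma update_insertNth_zero {Zt : Type*} {n : ℕ} (z z' : Zt) (w : Fin n → Zt) :
    Function.update (Fin.insertNth (α := fun _ : Fin (n+1) => Zt) 0 z w) 0 z' = Fin.insertNth (α := fun _ : Fin (n+1) => Zt) 0 z' w := by
  funext j
  induction j using Fin.cases with
  | zero => rw [Function.update_self, Fin.insertNth_apply_same]
  | succ j =>
      rw [Function.update_of_ne (Fin.succ_ne_zero j)]
      have h1 : Fin.insertNth (α := fun _ : Fin (n+1) => Zt) 0 z w j.succ = w j := by
        simpa [Fin.zero_succAbove] using
          Fin.insertNth_apply_succAbove (α := fun _ : Fin (n+1) => Zt) 0 z w j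
      have h2 : Fin.insertNth (α := fun _ : Fin (n+1) => Zt) 0 z' w j.succ = w j := by
        simpa [Fin.zero_succAbove] using
          Fin.insertNth_apply_succAbove (α := fun _ : Fin (n+1) => Zt) 0 z' w j
      rw [h1, h2]

lemma update_insertNth_succ {Zt : Type*} {n : ℕ} (z y : Zt) (w : Fin n → Zt) (i : Fin n) :
    Function.update (Fin.insertNth (α := fun _ : Fin (n+1) => Zt) 0 z w) i.succ y = Fin.insertNth (α := fun _ : Fin (n+1) => Zt) 0 z (Function.update w i y) := by
  funext j
  induction j using Fin.cases with
  | zero =>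
      rw [Function.update_of_ne (Fin.succ_ne_zero i).symm, Fin.insertNth_apply_same,
        Fin.insertNth_apply_same]
  | succ j =>
      rcases eq_or_ne j i with rfl | hji
      · rw [Function.update_self]
        have h1 : Fin.insertNth (α := fun _ : Fin (n+1) => Zt) 0 z (Function.update w j y) j.succ
            = Function.update w j y j := by
          have := Fin.insertNth_apply_succAbove (α := fun _ : Fin (n+1) => Zt) 0 z
            (Function.update w j y) j
          simpa [Fin.zero_succAbove] using this
        rw [h1, Function.update_self]
      · rw [Function.update_of_ne (fun h => hji (Fin.succ_injective _ h))]
        have h1 : Fin.insertNth (α := fun _ : Fin (n+1) => Zt) 0 z w j.succ = w j := by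
          have := Fin.insertNth_apply_succAbove (α := fun _ : Fin (n+1) => Zt) 0 z w j
          simpa [Fin.zero_succAbove] using this
        have h2 : Fin.insertNth (α := fun _ : Fin (n+1) => Zt) 0 z (Function.update w i y) j.succ
            = Function.update w i y j := by
          have := Fin.insertNth_apply_succAbove (α := fun _ : Fin (n+1) => Zt) 0 z
            (Function.update w i y) j
          simpa [Fin.zero_succAbove] using this
        rw [h1, h2, Function.update_of_ne hji]

/-- McDiarmid MGF bound for product measures. -/
lemma mcdiarmid_mgf {Zt : Type*} [MeasurableSpace Zt] (P : Measure Zt)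
    [IsProbabilityMeasure P] :
    ∀ (n : ℕ) (f : (Fin n → Zt) → ℝ), Measurable f → ∀ (c B : ℝ),
      (∀ (x : Fin n → Zt) (i : Fin n) (y : Zt), |f x - f (Function.update x i y)| ≤ c) →
      (∀ x, |f x| ≤ B) → ∀ t : ℝ,
      ∫ x, exp (t * (f x - ∫ y, f y ∂(Measure.pi fun _ : Fin n => P)))
          ∂(Measure.pi fun _ : Fin n => P)
        ≤ exp (t ^ 2 * n * c ^ 2 / 8) := by
  have hZne : Nonempty Zt := by
    by_contra hne
    rw [not_nonempty_iff] at hne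
    have h1 : P Set.univ = 1 := measure_univ
    rw [Set.univ_eq_empty_iff.2 hne, measure_empty] at h1
    exact zero_ne_one h1
  intro n
  induction n with
  | zero =>
      intro f hf c B hbd hB t
      have hconst : ∀ x y : Fin 0 → Zt, x = y := fun x y => funext fun j => j.elim0
      have hIf : ∀ x : Fin 0 → Zt,
          (∫ y, f y ∂(Measure.pi fun _ : Fin 0 => P)) = f x := by
        intro x
        have : (fun y : Fin 0 → Zt => f y) = fun _ => f x :=
          funext fun y => congrArg f (hconst y x)
        rw [this, integral_const]
        simp
      have h1 : (fun x : Fin 0 → Zt =>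
          exp (t * (f x - ∫ y, f y ∂(Measure.pi fun _ : Fin 0 => P)))) = fun _ => (1:ℝ) := by
        funext x
        rw [hIf x]
        simp
      rw [h1, integral_const]
      simp only [measure_univ, ENNReal.toReal_one, probReal_univ, smul_eq_mul, mul_one]
      have : t ^ 2 * (0:ℕ) * c ^ 2 / 8 = 0 := by push_cast; ring
      rw [this]
      simp
  | succ n ih =>
      intro f hf c B hbd hB t
      set pm : Measure (Fin n → Zt) := Measure.pi fun _ => P with hpm
      set pms : Measure (Fin (n+1) → Zt) := Measure.pi fun _ => P with hpms
      set e := MeasurableEquiv.piFinSuccAbove (fun _ : Fin (n+1) => Zt) 0 with he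
      have hmp : MeasurePreserving e pms (P.prod pm) :=
        measurePreserving_piFinSuccAbove (fun _ : Fin (n+1) => P) 0
      set F : Zt × (Fin n → Zt) → ℝ := fun q => f (e.symm q) with hF
      have hFeq : ∀ (z : Zt) (w : Fin n → Zt), F (z, w) = f (Fin.insertNth 0 z w) := by
        intro z w
        simp only [hF, he, MeasurableEquiv.piFinSuccAbove_symm_apply, Fin.insertNthEquiv,
          Equiv.coe_fn_mk]
      have hFmeas : Measurable F := hf.comp e.symm.measurable
      have hFB : ∀ q, |F q| ≤ B := fun q => hB _
      -- conditional expectation over first coordinate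
      set g : (Fin n → Zt) → ℝ := fun w => ∫ z, F (z, w) ∂P with hg
      have hgmeas : Measurable g :=
        (hFmeas.stronglyMeasurable.integral_prod_left').measurable
      have hFw_int : ∀ w, Integrable (fun z => F (z, w)) P := by
        intro w
        refine (integrable_const B).mono'
          ((hFmeas.comp (measurable_id.prodMk measurable_const)).aestronglyMeasurable)
          (Filter.Eventually.of_forall fun z => ?_)
        rw [Real.norm_eq_abs]; exact hFB _
      have hgB : ∀ w, |g w| ≤ B := by
        intro w
        rw [← Real.norm_eq_abs]
        calc ‖∫ z, F (z, w) ∂P‖ ≤ B * (P Set.univ).toReal :=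
              norm_integral_le_of_norm_le_const
                (Filter.Eventually.of_forall fun z => by rw [Real.norm_eq_abs]; exact hFB _)
          _ = B := by simp
      have hgbd : ∀ (w : Fin n → Zt) (i : Fin n) (y : Zt),
          |g w - g (Function.update w i y)| ≤ c := by
        intro w i y
        have heq : g w - g (Function.update w i y)
            = ∫ z, (F (z, w) - F (z, Function.update w i y)) ∂P :=
          (integral_sub (hFw_int w) (hFw_int _)).symm
        rw [heq, ← Real.norm_eq_abs]
        calc ‖∫ z, (F (z, w) - F (z, Function.update w i y)) ∂P‖
            ≤ c * (P Set.univ).toReal := by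
              refine norm_integral_le_of_norm_le_const
                (Filter.Eventually.of_forall fun z => ?_)
              rw [Real.norm_eq_abs, hFeq, hFeq, ← update_insertNth_succ]
              exact hbd (Fin.insertNth 0 z w) i.succ y
          _ = c := by simp
      -- total expectation via Fubini
      set Ef : ℝ := ∫ x, f x ∂pms with hEf
      have hFint : Integrable F (P.prod pm) := by
        refine (integrable_const B).mono' hFmeas.aestronglyMeasurable
          (Filter.Eventually.of_forall fun q => ?_)
        rw [Real.norm_eq_abs]; exact hFB _
      have hEfg : Ef = ∫ w, g w ∂pm := by
        have h1 : Ef = ∫ q, F q ∂(P.prod pm) := by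
          rw [hEf, ← hmp.integral_comp e.measurableEmbedding F]
          congr 1
          funext x
          simp only [hF, MeasurableEquiv.symm_apply_apply]
        rw [h1, integral_prod_symm F hFint]
      -- pointwise (in w) Hoeffding bound for the inner integral
      have hinner : ∀ w : Fin n → Zt,
          ∫ z, exp (t * (F (z, w) - Ef)) ∂P
            ≤ exp (t ^ 2 * c ^ 2 / 8) * exp (t * (g w - Ef)) := by
        intro w
        set aw : ℝ := sInf (Set.range fun z => F (z, w)) with haw
        have hrne : (Set.range fun z => F (z, w)).Nonempty := Set.range_nonempty _
        have hbdd : BddBelow (Set.range fun z => F (z, w)) := by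
          refine ⟨-B, fun y hy => ?_⟩
          obtain ⟨z, rfl⟩ := hy
          linarith [abs_le.1 (hFB (z, w))]
        have hlow : ∀ z, aw ≤ F (z, w) := fun z => csInf_le hbdd (Set.mem_range_self z)
        have hup : ∀ z, F (z, w) ≤ aw + c := by
          intro z
          have : F (z, w) - c ≤ aw := by
            refine le_csInf hrne fun y hy => ?_
            obtain ⟨z', rfl⟩ := hy
            have hdiff : |F (z, w) - F (z', w)| ≤ c := by
              rw [hFeq, hFeq, ← update_insertNth_zero z z' w]
              exact hbd (Fin.insertNth 0 z w) 0 z'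
            linarith [abs_le.1 hdiff]
          linarith
        have hhoeff := hoeffding_lemma P (fun z => F (z, w) - g w)
          ((hFmeas.comp (measurable_id.prodMk measurable_const)).sub measurable_const)
          (aw - g w) (aw + c - g w) t
          (fun z => ⟨sub_le_sub_right (hlow z) (g w), sub_le_sub_right (hup z) (g w)⟩)
          (by rw [integral_sub (hFw_int w) (integrable_const _), integral_const]; simp [hg])
        have hsimp : (t ^ 2 * ((aw + c - g w) - (aw - g w)) ^ 2 / 8) = t ^ 2 * c ^ 2 / 8 := by
          ring_nf
        rw [hsimp] at hhoeff
        have hsplit : ∀ z, exp (t * (F (z, w) - Ef))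
            = exp (t * (F (z, w) - g w)) * exp (t * (g w - Ef)) := by
          intro z
          rw [← exp_add]
          congr 1
          ring
        calc ∫ z, exp (t * (F (z, w) - Ef)) ∂P
            = ∫ z, exp (t * (F (z, w) - g w)) * exp (t * (g w - Ef)) ∂P := by
              simp_rw [hsplit]
          _ = (∫ z, exp (t * (F (z, w) - g w)) ∂P) * exp (t * (g w - Ef)) :=
              integral_mul_const _ _
          _ ≤ exp (t ^ 2 * c ^ 2 / 8) * exp (t * (g w - Ef)) :=
              mul_le_mul_of_nonneg_right hhoeff (exp_pos _).le
      -- assemble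
      have hexpFint : Integrable (fun q => exp (t * (F q - Ef))) (P.prod pm) := by
        refine (integrable_const (exp (|t| * (B + |Ef|)))).mono'
          ((hFmeas.sub measurable_const).const_mul t).exp.aestronglyMeasurable
          (Filter.Eventually.of_forall fun q => ?_)
        rw [Real.norm_eq_abs, abs_exp, exp_le_exp]
        calc t * (F q - Ef) ≤ |t * (F q - Ef)| := le_abs_self _
          _ = |t| * |F q - Ef| := abs_mul _ _
          _ ≤ |t| * (B + |Ef|) := by
              apply mul_le_mul_of_nonneg_left _ (abs_nonneg t)
              calc |F q - Ef| ≤ |F q| + |Ef| := abs_sub _ _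
                _ ≤ B + |Ef| := by linarith [hFB q]
      have hexpgint : Integrable (fun w => exp (t * (g w - Ef))) pm := by
        refine (integrable_const (exp (|t| * (B + |Ef|)))).mono'
          ((hgmeas.sub measurable_const).const_mul t).exp.aestronglyMeasurable
          (Filter.Eventually.of_forall fun w => ?_)
        rw [Real.norm_eq_abs, abs_exp, exp_le_exp]
        calc t * (g w - Ef) ≤ |t * (g w - Ef)| := le_abs_self _
          _ = |t| * |g w - Ef| := abs_mul _ _
          _ ≤ |t| * (B + |Ef|) := by
              apply mul_le_mul_of_nonneg_left _ (abs_nonneg t)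
              calc |g w - Ef| ≤ |g w| + |Ef| := abs_sub _ _
                _ ≤ B + |Ef| := by linarith [hgB w]
      have hstep0 : ∫ x, exp (t * (f x - Ef)) ∂pms
          = ∫ q, exp (t * (F q - Ef)) ∂(P.prod pm) := by
        rw [← hmp.integral_comp e.measurableEmbedding (fun q => exp (t * (F q - Ef)))]
        congr 1
        funext x
        simp only [hF, MeasurableEquiv.symm_apply_apply]
      have hstep1 : ∫ q, exp (t * (F q - Ef)) ∂(P.prod pm)
          = ∫ w, (∫ z, exp (t * (F (z, w) - Ef)) ∂P) ∂pm :=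
        integral_prod_symm _ hexpFint
      have hstep2 : ∫ w, (∫ z, exp (t * (F (z, w) - Ef)) ∂P) ∂pm
          ≤ ∫ w, exp (t ^ 2 * c ^ 2 / 8) * exp (t * (g w - Ef)) ∂pm := by
        refine integral_mono_of_nonneg
          (Filter.Eventually.of_forall fun w => integral_nonneg fun z => (exp_pos _).le)
          (hexpgint.const_mul _) (Filter.Eventually.of_forall fun w => hinner w)
      have hstep3 : ∫ w, exp (t ^ 2 * c ^ 2 / 8) * exp (t * (g w - Ef)) ∂pm
          = exp (t ^ 2 * c ^ 2 / 8) * ∫ w, exp (t * (g w - Ef)) ∂pm :=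
        integral_const_mul _ _
      have hstep4 : ∫ w, exp (t * (g w - Ef)) ∂pm ≤ exp (t ^ 2 * n * c ^ 2 / 8) := by
        have := ih g hgmeas c B hgbd hgB t
        rwa [← hEfg] at this
      calc ∫ x, exp (t * (f x - Ef)) ∂pms
          ≤ exp (t ^ 2 * c ^ 2 / 8) * exp (t ^ 2 * n * c ^ 2 / 8) := by
            rw [hstep0, hstep1]
            calc ∫ w, (∫ z, exp (t * (F (z, w) - Ef)) ∂P) ∂pm
                ≤ exp (t ^ 2 * c ^ 2 / 8) * ∫ w, exp (t * (g w - Ef)) ∂pm := by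
                  rw [← hstep3]; exact hstep2
              _ ≤ exp (t ^ 2 * c ^ 2 / 8) * exp (t ^ 2 * n * c ^ 2 / 8) :=
                  mul_le_mul_of_nonneg_left hstep4 (exp_pos _).le
        _ = exp (t ^ 2 * (n + 1 : ℕ) * c ^ 2 / 8) := by
            rw [← exp_add]
            congr 1
            push_cast
            ring

lemma map_joint {Ω Zt : Type*} [MeasurableSpace Ω] [MeasurableSpace Zt]
    (μ : Measure Ω) [IsProbabilityMeasure μ] (P : Measure Zt) [IsProbabilityMeasure P]
    (n : ℕ) (Z : Fin n → Ω → Zt) (hZmeas : ∀ i, Measurable (Z i))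
    (hZindep : iIndepFun Z μ)
    (hZlaw : ∀ i, Measure.map (Z i) μ = P) :
    Measure.map (fun ω i => Z i ω) μ = Measure.pi (fun _ : Fin n => P) := by
  refine (Measure.pi_eq (μ := fun _ : Fin n => P) fun s hs => ?_).symm
  rw [Measure.map_apply (measurable_pi_lambda _ hZmeas) (MeasurableSet.univ_pi hs)]
  have hpre : (fun ω i => Z i ω) ⁻¹' Set.pi Set.univ s = ⋂ i ∈ Finset.univ, Z i ⁻¹' s i := by
    ext ω
    simp [Set.mem_pi]
  rw [hpre, hZindep.measure_inter_preimage_eq_mul Finset.univ (fun i _ => hs i)]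
  refine Finset.prod_congr rfl fun i _ => ?_
  rw [← hZlaw i, Measure.map_apply (hZmeas i) (hs i)]

lemma map_pair {Zt : Type*} [MeasurableSpace Zt] (P : Measure Zt) [IsProbabilityMeasure P]
    (n : ℕ) (i j : Fin n) (hij : i ≠ j) :
    Measure.map (fun x : Fin n → Zt => (x i, x j)) (Measure.pi fun _ : Fin n => P)
      = P.prod P := by
  refine (Measure.prod_eq (μ := P) (ν := P) fun s t hs ht => ?_).symm
  rw [Measure.map_apply ((measurable_pi_apply i).prodMk (measurable_pi_apply j)) (hs.prod ht)]
  have hset : (fun x : Fin n → Zt => (x i, x j)) ⁻¹' (s ×ˢ t)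
      = Set.pi Set.univ (Function.update (Function.update (fun _ => Set.univ) i s) j t) := by
    ext x
    simp only [Set.mem_preimage, Set.mem_prod, Set.mem_pi, Set.mem_univ, true_implies]
    constructor
    · rintro ⟨h1, h2⟩ k
      rcases eq_or_ne k j with rfl | hkj
      · rw [Function.update_self]; exact h2
      · rw [Function.update_of_ne hkj]
        rcases eq_or_ne k i with rfl | hki
        · rw [Function.update_self]; exact h1
        · rw [Function.update_of_ne hki]; trivial
    · intro h
      constructor
      · have := h i; rwa [Function.update_of_ne hij, Function.update_self] at this
      · have := h j; rwa [Function.update_self] at this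
  rw [hset, Measure.pi_pi]
  have hfac : ∀ k : Fin n,
      P (Function.update (Function.update (fun _ : Fin n => Set.univ) i s) j t k)
        = Function.update (Function.update (fun _ : Fin n => (1:ENNReal)) i (P s)) j (P t) k := by
    intro k
    rcases eq_or_ne k j with rfl | hkj
    · rw [Function.update_self, Function.update_self]
    · rw [Function.update_of_ne hkj, Function.update_of_ne hkj]
      rcases eq_or_ne k i with rfl | hki
      · rw [Function.update_self, Function.update_self]
      · rw [Function.update_of_ne hki, Function.update_of_ne hki]
        exact measure_univ
  rw [Finset.prod_congr rfl (fun k _ => hfac k),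
    Finset.prod_update_of_mem (Finset.mem_univ j),
    Finset.prod_update_of_mem (by simp [Finset.mem_sdiff, hij] : i ∈ Finset.univ \ {j})]
  simp [mul_comm]

/-- For a bounded kernel with bound `M_k`, if `Z₁,…,Zₙ` are i.i.d. from `P`,
with `μ = E[φ(Z)]` and `μ̂ = (1/n) ∑ᵢ φ(Zᵢ)`, then for all `δ > 0`:
`P(‖μ − μ̂‖ > 2√(M_k/n)(1 + √(δ/2))) ≤ e^{−δ}`. -/
theorem mean_embedding_concentration
    {Zt H Ω : Type*} [NormedAddCommGroup H] [InnerProductSpace ℝ H] [CompleteSpace H]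
    [MeasurableSpace Zt] [MeasurableSpace Ω]
    (μ : Measure Ω) [IsProbabilityMeasure μ]
    (P : Measure Zt) [IsProbabilityMeasure P]
    (φ : Zt → H) (k : Zt → Zt → ℝ) (Mk : ℝ)
    (hrepr : ∀ z z', k z z' = ⟪φ z, φ z'⟫)
    (hbound : ∀ z, k z z ≤ Mk)
    (n : ℕ) (hn : 0 < n)
    (Z : Fin n → Ω → Zt)
    (hZmeas : ∀ i, Measurable (Z i))
    (hZindep : iIndepFun Z μ)
    (hZlaw : ∀ i, Measure.map (Z i) μ = P)
    (hint : Integrable (fun z => φ z) P)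
    (δ : ℝ) (hδ : 0 < δ) :
    μ {ω | ‖(∫ z, φ z ∂P) - (n : ℝ)⁻¹ • ∑ i, φ (Z i ω)‖ >
        2 * Real.sqrt (Mk / n) * (1 + Real.sqrt (δ / 2))} ≤
      ENNReal.ofReal (Real.exp (-δ)) := by
  classical
  have hZtne : Nonempty Zt := by
    by_contra hne
    rw [not_nonempty_iff] at hne
    have h1 : P Set.univ = 1 := measure_univ
    rw [Set.univ_eq_empty_iff.2 hne, measure_empty] at h1
    exact zero_ne_one h1
  have hkz : ∀ z, k z z = ‖φ z‖ ^ 2 := fun z => by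
    rw [hrepr z z, real_inner_self_eq_norm_sq]
  have hMk0 : 0 ≤ Mk := by
    obtain ⟨z⟩ := hZtne
    calc (0:ℝ) ≤ ‖φ z‖ ^ 2 := by positivity
      _ = k z z := (hkz z).symm
      _ ≤ Mk := hbound z
  set sM : ℝ := Real.sqrt Mk with hsM
  have hφB : ∀ z, ‖φ z‖ ≤ sM := by
    intro z
    rw [hsM, show ‖φ z‖ = Real.sqrt (‖φ z‖ ^ 2) from (Real.sqrt_sq (norm_nonneg _)).symm]
    exact Real.sqrt_le_sqrt (by rw [← hkz z]; exact hbound z)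
  -- measurable modification of φ
  have hφm := hint.aestronglyMeasurable
  set g0 : Zt → H := hφm.mk _ with hg0
  have hg0sm : StronglyMeasurable g0 := hφm.stronglyMeasurable_mk
  have hg0ae : (fun z => φ z) =ᵐ[P] g0 := hφm.ae_eq_mk
  set ψ : Zt → H := Set.indicator {z | ‖g0 z‖ ≤ sM} g0 with hψ
  have hψsm : StronglyMeasurable ψ :=
    hg0sm.indicator (measurableSet_le hg0sm.norm.measurable measurable_const)
  have hψB : ∀ z, ‖ψ z‖ ≤ sM := by
    intro z
    by_cases h : z ∈ {z | ‖g0 z‖ ≤ sM}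
    · rw [hψ, Set.indicator_of_mem h]; exact h
    · rw [hψ, Set.indicator_of_notMem h, norm_zero]; exact Real.sqrt_nonneg Mk
  have hψae : (fun z => φ z) =ᵐ[P] ψ := by
    filter_upwards [hg0ae] with z hz
    have hmem : z ∈ {z | ‖g0 z‖ ≤ sM} := by
      rw [Set.mem_setOf_eq, ← hz]; exact hφB z
    rw [hψ, Set.indicator_of_mem hmem, ← hz]
  have hψint : Integrable ψ P := hint.congr hψae
  set m : H := ∫ z, φ z ∂P with hm
  have hmψ : m = ∫ z, ψ z ∂P := integral_congr_ae hψae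
  have hmB : ‖m‖ ≤ sM := by
    rw [hmψ]
    calc ‖∫ z, ψ z ∂P‖ ≤ sM * (P Set.univ).toReal :=
          norm_integral_le_of_norm_le_const (Filter.Eventually.of_forall hψB)
      _ = sM := by simp
  set a : ℝ := 2 * Real.sqrt (Mk / n) * (1 + Real.sqrt (δ / 2)) with ha
  rcases eq_or_lt_of_le hMk0 with hMkz | hMkpos
  · -- degenerate case Mk = 0
    have hφ0 : ∀ z, φ z = 0 := by
      intro z
      have h := hφB z
      rw [hsM, ← hMkz, Real.sqrt_zero] at h
      exact norm_le_zero_iff.1 h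
    have ha0 : a = 0 := by
      rw [ha, ← hMkz]
      simp
    have hev : {ω | ‖m - (n:ℝ)⁻¹ • ∑ i, φ (Z i ω)‖ > a} = ∅ := by
      ext ω
      simp [hm, hφ0, ha0]
    rw [hev, measure_empty]
    exact zero_le
  -- main case Mk > 0
  have hn' : (n:ℝ) ≠ 0 := Nat.cast_ne_zero.2 hn.ne'
  have hnpos : (0:ℝ) < n := Nat.cast_pos.2 hn
  set f : (Fin n → Zt) → ℝ := fun x => ‖m - (n:ℝ)⁻¹ • ∑ i, ψ (x i)‖ with hf
  have hsumsm : StronglyMeasurable (fun x : Fin n → Zt => ∑ i, ψ (x i)) :=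
    Finset.stronglyMeasurable_fun_sum Finset.univ
      (fun i _ => hψsm.comp_measurable (measurable_pi_apply i))
  have hfmeas : Measurable f :=
    (stronglyMeasurable_const.sub (hsumsm.const_smul ((n:ℝ)⁻¹))).norm.measurable
  set Pn : Measure (Fin n → Zt) := Measure.pi fun _ : Fin n => P with hPn
  -- transfer the event to the product space
  have hmap := map_joint μ P n Z hZmeas hZindep hZlaw
  have hevent1 : μ {ω | ‖m - (n:ℝ)⁻¹ • ∑ i, φ (Z i ω)‖ > a}
      = μ {ω | f (fun i => Z i ω) > a} := by
    apply measure_congr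
    have hae_i : ∀ i : Fin n, ∀ᵐ ω ∂μ, φ (Z i ω) = ψ (Z i ω) := by
      intro i
      have h2 : ∀ᵐ z ∂(Measure.map (Z i) μ), φ z = ψ z := by
        rw [hZlaw i]; exact hψae
      exact ae_of_ae_map (hZmeas i).aemeasurable h2
    have hall : ∀ᵐ ω ∂μ, ∀ i, φ (Z i ω) = ψ (Z i ω) := ae_all_iff.2 hae_i
    rw [Filter.eventuallyEq_set]
    filter_upwards [hall] with ω hω
    simp only [Set.mem_setOf_eq, hf]
    rw [Finset.sum_congr rfl fun i _ => hω i]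
  have hevent2 : μ {ω | f (fun i => Z i ω) > a} = Pn {x | f x > a} := by
    rw [hPn, ← hmap,
      Measure.map_apply (measurable_pi_lambda _ hZmeas)
        (measurableSet_lt measurable_const hfmeas)]
    rfl
  rw [hevent1, hevent2]
  -- bounds on f
  have hfnn : ∀ x, 0 ≤ f x := fun x => norm_nonneg _
  have hsumB : ∀ x : Fin n → Zt, ‖(n:ℝ)⁻¹ • ∑ i, ψ (x i)‖ ≤ sM := by
    intro x
    rw [norm_smul, Real.norm_eq_abs, abs_of_nonneg (by positivity : (0:ℝ) ≤ (n:ℝ)⁻¹)]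
    have h2 : ‖∑ i, ψ (x i)‖ ≤ n * sM := by
      calc ‖∑ i, ψ (x i)‖ ≤ ∑ i, ‖ψ (x i)‖ := norm_sum_le _ _
        _ ≤ ∑ _i : Fin n, sM := Finset.sum_le_sum fun i _ => hψB _
        _ = n * sM := by
            rw [Finset.sum_const, Finset.card_univ, Fintype.card_fin, nsmul_eq_mul]
    calc (n:ℝ)⁻¹ * ‖∑ i, ψ (x i)‖ ≤ (n:ℝ)⁻¹ * (n * sM) := by
          exact mul_le_mul_of_nonneg_left h2 (by positivity)
      _ = sM := by field_simp
  have hfB : ∀ x, |f x| ≤ 2 * sM := by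
    intro x
    rw [abs_of_nonneg (hfnn x)]
    calc f x ≤ ‖m‖ + ‖(n:ℝ)⁻¹ • ∑ i, ψ (x i)‖ := norm_sub_le _ _
      _ ≤ sM + sM := add_le_add hmB (hsumB x)
      _ = 2 * sM := by ring
  have hfbd : ∀ (x : Fin n → Zt) (i : Fin n) (y : Zt),
      |f x - f (Function.update x i y)| ≤ 2 * sM / n := by
    intro x i y
    have hsumdiff : ∑ j, ψ (Function.update x i y j) - ∑ j, ψ (x j) = ψ y - ψ (x i) := by
      rw [← Finset.sum_sub_distrib,
        Finset.sum_eq_single i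
          (fun j _ hji => by rw [Function.update_of_ne hji, sub_self])
          (fun h => absurd (Finset.mem_univ i) h),
        Function.update_self]
    have hdiff : (m - (n:ℝ)⁻¹ • ∑ j, ψ (x j))
        - (m - (n:ℝ)⁻¹ • ∑ j, ψ (Function.update x i y j))
        = (n:ℝ)⁻¹ • (∑ j, ψ (Function.update x i y j) - ∑ j, ψ (x j)) := by
      rw [smul_sub]; abel
    calc |f x - f (Function.update x i y)|
        ≤ ‖(m - (n:ℝ)⁻¹ • ∑ j, ψ (x j))
            - (m - (n:ℝ)⁻¹ • ∑ j, ψ (Function.update x i y j))‖ :=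
          abs_norm_sub_norm_le _ _
      _ = (n:ℝ)⁻¹ * ‖ψ y - ψ (x i)‖ := by
          rw [hdiff, hsumdiff, norm_smul, Real.norm_eq_abs,
            abs_of_nonneg (by positivity : (0:ℝ) ≤ (n:ℝ)⁻¹)]
      _ ≤ (n:ℝ)⁻¹ * (sM + sM) := by
          refine mul_le_mul_of_nonneg_left ?_ (by positivity)
          exact le_trans (norm_sub_le _ _) (add_le_add (hψB y) (hψB _))
      _ = 2 * sM / n := by ring
  -- second moment bound
  set Y : Zt → H := fun z => ψ z - m with hY
  have hYsm : StronglyMeasurable Y := hψsm.sub stronglyMeasurable_const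
  have hYint : Integrable Y P := hψint.sub (integrable_const m)
  have hYzero : ∫ z, Y z ∂P = 0 := by
    rw [hY, integral_sub hψint (integrable_const m), integral_const]
    simp [← hmψ]
  have hYB : ∀ z, ‖Y z‖ ≤ 2 * sM := fun z =>
    le_trans (norm_sub_le _ _) (by linarith [hψB z, hmB])
  have hfY : ∀ x : Fin n → Zt, f x = (n:ℝ)⁻¹ * ‖∑ i, Y (x i)‖ := by
    intro x
    have h1 : ∑ i, Y (x i) = (∑ i, ψ (x i)) - n • m := by
      rw [hY, Finset.sum_sub_distrib, Finset.sum_const, Finset.card_univ, Fintype.card_fin]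
    have h2 : m - (n:ℝ)⁻¹ • ∑ i, ψ (x i) = -((n:ℝ)⁻¹ • ∑ i, Y (x i)) := by
      rw [h1, smul_sub, ← Nat.cast_smul_eq_nsmul ℝ n m, smul_smul,
        inv_mul_cancel₀ hn', one_smul]
      abel
    rw [hf]
    simp only []
    rw [h2, norm_neg, norm_smul, Real.norm_eq_abs,
      abs_of_nonneg (by positivity : (0:ℝ) ≤ (n:ℝ)⁻¹)]
  have hinteg_ij : ∀ i j : Fin n,
      Integrable (fun x : Fin n → Zt => (⟪Y (x i), Y (x j)⟫ : ℝ)) Pn := by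
    intro i j
    refine (integrable_const ((2*sM) * (2*sM))).mono'
      (((hYsm.comp_measurable (measurable_pi_apply i)).inner
        (hYsm.comp_measurable (measurable_pi_apply j))).aestronglyMeasurable)
      (Filter.Eventually.of_forall fun x => ?_)
    rw [Real.norm_eq_abs]
    exact le_trans (abs_real_inner_le_norm _ _)
      (mul_le_mul (hYB _) (hYB _) (norm_nonneg _) (by positivity))
  have hcross : ∀ i j : Fin n, i ≠ j →
      ∫ x, (⟪Y (x i), Y (x j)⟫ : ℝ) ∂Pn = 0 := by
    intro i j hij
    have hpairmeas : Measurable (fun x : Fin n → Zt => (x i, x j)) :=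
      (measurable_pi_apply i).prodMk (measurable_pi_apply j)
    have hsm2 : StronglyMeasurable (fun p : Zt × Zt => (⟪Y p.1, Y p.2⟫ : ℝ)) :=
      (hYsm.comp_measurable measurable_fst).inner (hYsm.comp_measurable measurable_snd)
    have h1 : ∫ x, (⟪Y (x i), Y (x j)⟫ : ℝ) ∂Pn
        = ∫ p : Zt × Zt, (⟪Y p.1, Y p.2⟫ : ℝ) ∂(P.prod P) := by
      rw [hPn, ← map_pair P n i j hij,
        integral_map hpairmeas.aemeasurable hsm2.aestronglyMeasurable]
    have hinteg2 : Integrable (fun p : Zt × Zt => (⟪Y p.1, Y p.2⟫ : ℝ)) (P.prod P) := by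
      refine (integrable_const ((2*sM) * (2*sM))).mono' hsm2.aestronglyMeasurable
        (Filter.Eventually.of_forall fun p => ?_)
      rw [Real.norm_eq_abs]
      exact le_trans (abs_real_inner_le_norm _ _)
        (mul_le_mul (hYB _) (hYB _) (norm_nonneg _) (by positivity))
    rw [h1, integral_prod _ hinteg2]
    have h2 : ∀ z : Zt, ∫ b, (⟪Y z, Y b⟫ : ℝ) ∂P = 0 := by
      intro z
      rw [integral_inner hYint, hYzero, inner_zero_right]
    simp only [h2, integral_zero]
  have hdiag : ∀ i : Fin n, ∫ x, (⟪Y (x i), Y (x i)⟫ : ℝ) ∂Pn ≤ 4 * Mk := by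
    intro i
    have hptw : ∀ x : Fin n → Zt, (⟪Y (x i), Y (x i)⟫ : ℝ) ≤ 4 * Mk := by
      intro x
      rw [real_inner_self_eq_norm_sq]
      calc ‖Y (x i)‖ ^ 2 ≤ (2 * sM) ^ 2 :=
            pow_le_pow_left₀ (norm_nonneg _) (hYB _) 2
        _ = 4 * Mk := by
            rw [mul_pow, hsM, Real.sq_sqrt hMk0]; ring
    calc ∫ x, (⟪Y (x i), Y (x i)⟫ : ℝ) ∂Pn ≤ ∫ _x, 4 * Mk ∂Pn :=
          integral_mono (hinteg_ij i i) (integrable_const _) hptw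
      _ = 4 * Mk := by simp
  have hSsq : ∫ x, ‖∑ i, Y (x i)‖ ^ 2 ∂Pn ≤ n * (4 * Mk) := by
    have hexp : ∀ x : Fin n → Zt,
        ‖∑ i, Y (x i)‖ ^ 2 = ∑ i, ∑ j, (⟪Y (x i), Y (x j)⟫ : ℝ) := by
      intro x
      rw [← real_inner_self_eq_norm_sq, sum_inner]
      exact Finset.sum_congr rfl fun i _ => inner_sum _ _ _
    simp_rw [hexp]
    rw [integral_finset_sum Finset.univ
      (fun i _ => integrable_finset_sum Finset.univ (fun j _ => hinteg_ij i j))]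
    have hrow : ∀ i : Fin n,
        ∫ x, (∑ j, (⟪Y (x i), Y (x j)⟫ : ℝ)) ∂Pn ≤ 4 * Mk := by
      intro i
      rw [integral_finset_sum Finset.univ (fun j _ => hinteg_ij i j)]
      have hsingle : ∑ j : Fin n, ∫ x, (⟪Y (x i), Y (x j)⟫ : ℝ) ∂Pn
          = ∫ x, (⟪Y (x i), Y (x i)⟫ : ℝ) ∂Pn :=
        Finset.sum_eq_single i
          (fun j _ hji => hcross i j (fun h => hji h.symm))
          (fun h => absurd (Finset.mem_univ i) h)
      rw [hsingle]
      exact hdiag i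
    calc ∑ i : Fin n, ∫ x, (∑ j, (⟪Y (x i), Y (x j)⟫ : ℝ)) ∂Pn
        ≤ ∑ _i : Fin n, 4 * Mk := Finset.sum_le_sum fun i _ => hrow i
      _ = n * (4 * Mk) := by
          rw [Finset.sum_const, Finset.card_univ, Fintype.card_fin, nsmul_eq_mul]
  have hf2 : ∫ x, f x ^ 2 ∂Pn ≤ 4 * Mk / n := by
    have hfx2 : ∀ x, f x ^ 2 = ((n:ℝ)⁻¹) ^ 2 * ‖∑ i, Y (x i)‖ ^ 2 := fun x => by
      rw [hfY x]; ring
    simp_rw [hfx2]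
    rw [integral_const_mul]
    calc ((n:ℝ)⁻¹) ^ 2 * ∫ x, ‖∑ i, Y (x i)‖ ^ 2 ∂Pn
        ≤ ((n:ℝ)⁻¹) ^ 2 * (n * (4 * Mk)) :=
          mul_le_mul_of_nonneg_left hSsq (by positivity)
      _ = 4 * Mk / n := by field_simp
  set Ef : ℝ := ∫ x, f x ∂Pn with hEf
  have hEfnn : 0 ≤ Ef := integral_nonneg hfnn
  have hmemlp : MemLp f 2 Pn :=
    MemLp.of_bound hfmeas.aestronglyMeasurable (2 * sM)
      (Filter.Eventually.of_forall fun x => by rw [Real.norm_eq_abs]; exact hfB x)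
  have hvar := variance_nonneg f Pn
  rw [variance_eq_sub hmemlp] at hvar
  have hEfsq : Ef ^ 2 ≤ 4 * Mk / n := by
    have h1 : (∫ x, (f ^ 2) x ∂Pn) = ∫ x, f x ^ 2 ∂Pn := by
      simp only [Pi.pow_apply]
    -- hvar : 0 ≤ Pn[f ^ 2] - Pn[f] ^ 2
    have h2 : Ef ^ 2 ≤ ∫ x, f x ^ 2 ∂Pn := by
      rw [← h1]
      linarith [hvar]
    linarith [hf2]
  have hEfle : Ef ≤ 2 * Real.sqrt (Mk / n) := by
    have h5 : Ef ≤ Real.sqrt (4 * Mk / n) := by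
      have h6 := Real.sqrt_le_sqrt hEfsq
      rwa [Real.sqrt_sq hEfnn] at h6
    have h4 : Real.sqrt (4 * Mk / (n:ℝ)) = 2 * Real.sqrt (Mk / n) := by
      rw [show 4 * Mk / (n:ℝ) = 2 ^ 2 * (Mk / n) by ring,
        Real.sqrt_mul (by positivity) _, Real.sqrt_sq (by norm_num)]
    linarith
  -- Chernoff
  set ε : ℝ := 2 * Real.sqrt (Mk / n) * Real.sqrt (δ / 2) with hε
  have hεpos : 0 < ε := by
    refine mul_pos (mul_pos two_pos (Real.sqrt_pos.2 (by positivity))) (Real.sqrt_pos.2 ?_)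
    positivity
  have hsub : {x : Fin n → Zt | f x > a} ⊆ {x | ε ≤ f x - Ef} := by
    intro x hx
    simp only [Set.mem_setOf_eq] at hx ⊢
    have haε : a = 2 * Real.sqrt (Mk / n) + ε := by rw [ha, hε]; ring
    linarith [hEfle]
  set t : ℝ := ε * n / Mk with ht
  have ht0 : 0 ≤ t := div_nonneg (mul_nonneg hεpos.le hnpos.le) hMkpos.le
  have hXint : Integrable (fun x => Real.exp (t * (f x - Ef))) Pn := by
    refine (integrable_const (Real.exp (|t| * (2 * sM + |Ef|)))).mono'
      (((hfmeas.sub measurable_const).const_mul t).exp.aestronglyMeasurable)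
      (Filter.Eventually.of_forall fun x => ?_)
    rw [Real.norm_eq_abs, Real.abs_exp, Real.exp_le_exp]
    calc t * (f x - Ef) ≤ |t * (f x - Ef)| := le_abs_self _
      _ = |t| * |f x - Ef| := abs_mul _ _
      _ ≤ |t| * (2 * sM + |Ef|) := by
          refine mul_le_mul_of_nonneg_left ?_ (abs_nonneg t)
          calc |f x - Ef| ≤ |f x| + |Ef| := abs_sub _ _
            _ ≤ 2 * sM + |Ef| := by linarith [hfB x]
  have hmgfle : mgf (fun x => f x - Ef) Pn t
      ≤ Real.exp (t ^ 2 * n * (2 * sM / n) ^ 2 / 8) := by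
    have h := mcdiarmid_mgf P n f hfmeas (2 * sM / n) (2 * sM) hfbd hfB t
    rw [← hPn, ← hEf] at h
    simpa [mgf] using h
  have hchern := measure_ge_le_exp_mul_mgf (X := fun x => f x - Ef) (μ := Pn) ε ht0 hXint
  have hfinal : (Pn {x | f x > a}).toReal ≤ Real.exp (-δ) := by
    have h1 : (Pn {x | f x > a}).toReal ≤ (Pn {x | ε ≤ f x - Ef}).toReal :=
      ENNReal.toReal_mono (measure_ne_top _ _) (measure_mono hsub)
    have h2 : Real.exp (-t * ε) * mgf (fun x => f x - Ef) Pn t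
        ≤ Real.exp (-t * ε) * Real.exp (t ^ 2 * n * (2 * sM / n) ^ 2 / 8) :=
      mul_le_mul_of_nonneg_left hmgfle (Real.exp_pos _).le
    have hsM2 : sM ^ 2 = Mk := by rw [hsM]; exact Real.sq_sqrt hMk0
    have hε2 : ε ^ 2 = 2 * Mk * δ / n := by
      rw [hε, mul_pow, mul_pow,
        Real.sq_sqrt (show (0:ℝ) ≤ Mk / n by positivity),
        Real.sq_sqrt (by linarith : (0:ℝ) ≤ δ / 2)]
      field_simp
    have h3 : Real.exp (-t * ε) * Real.exp (t ^ 2 * n * (2 * sM / n) ^ 2 / 8)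
        = Real.exp (-δ) := by
      rw [← Real.exp_add]
      congr 1
      have hc2 : (2 * sM / n) ^ 2 = 4 * Mk / n ^ 2 := by
        rw [div_pow, mul_pow, hsM2]; ring
      rw [hc2, ht]
      have h4 : -(ε * n / Mk) * ε + (ε * n / Mk) ^ 2 * n * (4 * Mk / n ^ 2) / 8
          = -(ε ^ 2 * n / (2 * Mk)) := by
        field_simp
        ring
      rw [h4, hε2]
      field_simp
    calc (Pn {x | f x > a}).toReal ≤ (Pn {x | ε ≤ f x - Ef}).toReal := h1
      _ ≤ Real.exp (-t * ε) * mgf (fun x => f x - Ef) Pn t := hchern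
      _ ≤ Real.exp (-t * ε) * Real.exp (t ^ 2 * n * (2 * sM / n) ^ 2 / 8) := h2
      _ = Real.exp (-δ) := h3
  exact (ENNReal.le_ofReal_iff_toReal_le (measure_ne_top _ _) (Real.exp_pos _).le).2 hfinal
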